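/- Let θ be a real 2×2 matrix, η ∈ ℝ², p ∈ ℝ², and let (z, w, φ) be as above with sin φ(t) = ⟨p, exp(z(t)θ)η⟩, φ continuous. If there exists T > 0 with ⟨p, w(T)⟩ = 0, then sin φ(t) = 0 for all t ∈ [0, T]. -/

import Mathlib

open Real Matrix

/-- The horizontal `ℝ`-component: `z(t) = ∫₀^t cos φ(s) ds`. -/
noncomputable def zComp (φ : ℝ → ℝ) (t : ℝ) : ℝ :=
  ∫ s in (0 : ℝ)..t, cos (φ s)

/-- The horizontal `ℝ²`-component: `w(t) = ∫₀^t sin φ(s) · exp(z(s)θ)η ds`. -/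
noncomputable def wComp (θ : Matrix (Fin 2) (Fin 2) ℝ) (η : Fin 2 → ℝ)
    (φ : ℝ → ℝ) (t : ℝ) : Fin 2 → ℝ :=
  ∫ s in (0 : ℝ)..t, sin (φ s) • (NormedSpace.exp (zComp φ s • θ)).mulVec η

/-- Along a normal extremal, where `sin φ(t) = ⟨p, exp(z(t)θ)η⟩` with `p` constant,
if `⟨p, w(T)⟩ = 0` for some `T > 0`, then `sin φ(t) = 0` for all `t ∈ [0, T]`. -/
theorem sin_vanishes_of_inner_w_zero (θ : Matrix (Fin 2) (Fin 2) ℝ) (η p : Fin 2 → ℝ)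
    (φ : ℝ → ℝ) (hφ : Continuous φ)
    (hsin : ∀ t : ℝ, sin (φ t) = p ⬝ᵥ (NormedSpace.exp (zComp φ t • θ)).mulVec η)
    (T : ℝ) (hT : 0 < T) (hw : p ⬝ᵥ wComp θ η φ T = 0) :
    ∀ t ∈ Set.Icc 0 T, sin (φ t) = 0 := by
  -- continuity of the vector integrand
  have hz : Continuous (zComp φ) :=
    intervalIntegral.continuous_primitive
      (fun a b => ((Real.continuous_cos.comp hφ).intervalIntegrable a b)) 0
  have hexp : Continuous fun A : Matrix (Fin 2) (Fin 2) ℝ => NormedSpace.exp A := by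
    letI : SeminormedRing (Matrix (Fin 2) (Fin 2) ℝ) := Matrix.linftyOpSemiNormedRing
    letI : NormedRing (Matrix (Fin 2) (Fin 2) ℝ) := Matrix.linftyOpNormedRing
    letI : NormedAlgebra ℝ (Matrix (Fin 2) (Fin 2) ℝ) := Matrix.linftyOpNormedAlgebra
    letI : NormedAlgebra ℚ (Matrix (Fin 2) (Fin 2) ℝ) := NormedAlgebra.restrictScalars ℚ ℝ _
    exact NormedSpace.exp_continuous
  have hvec : Continuous fun s =>
      sin (φ s) • (NormedSpace.exp (zComp φ s • θ)).mulVec η := by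
    apply (Real.continuous_sin.comp hφ).smul
    exact ((hexp.comp (hz.smul continuous_const)).matrix_mulVec continuous_const)
  -- dot product with `p` as a continuous linear map
  let L : (Fin 2 → ℝ) →L[ℝ] ℝ :=
    LinearMap.toContinuousLinearMap
      { toFun := fun v => p ⬝ᵥ v
        map_add' := fun x y => dotProduct_add p x y
        map_smul' := fun c x => by simp }
  have hint : ∫ s in (0:ℝ)..T, sin (φ s) ^ 2 = 0 := by
    have := L.intervalIntegral_comp_comm
      (hvec.intervalIntegrable (μ := MeasureTheory.volume) 0 T)
    have hLw : ∫ s in (0:ℝ)..T,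
        L (sin (φ s) • (NormedSpace.exp (zComp φ s • θ)).mulVec η) = L (wComp θ η φ T) := this
    have hL : ∀ s, L (sin (φ s) • (NormedSpace.exp (zComp φ s • θ)).mulVec η)
        = sin (φ s) ^ 2 := by
      intro s
      have : L (sin (φ s) • (NormedSpace.exp (zComp φ s • θ)).mulVec η)
          = sin (φ s) * (p ⬝ᵥ (NormedSpace.exp (zComp φ s • θ)).mulVec η) := by
        show p ⬝ᵥ (sin (φ s) • (NormedSpace.exp (zComp φ s • θ)).mulVec η) = _
        rw [dotProduct_smul, smul_eq_mul]
      rw [this, ← hsin s, sq]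
    rw [intervalIntegral.integral_congr (fun s _ => hL s)] at hLw
    simpa [L] using hLw.trans hw
  -- conclude: continuous nonnegative with zero integral
  intro t ht
  by_contra hne
  have hpos : 0 < sin (φ t) ^ 2 := by positivity
  have hcont : Continuous fun s => sin (φ s) ^ 2 :=
    (Real.continuous_sin.comp hφ).pow 2
  -- find a small interval around `t` inside `[0, T]` where `sin² ∘ φ > 0`
  obtain ⟨δ, hδ, hball⟩ := Metric.continuous_iff.mp hcont t (sin (φ t) ^ 2 / 2) (by linarith)
  set a := max 0 (t - δ) with ha
  set b := min T (t + δ) with hb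
  have hab : a < b := by
    rcases ht with ⟨ht0, htT⟩
    apply max_lt <;> [skip; skip] <;> apply lt_min <;> linarith
  have hposon : ∀ x ∈ Set.Ioo a b, 0 < sin (φ x) ^ 2 := by
    intro x hx
    have hdist : dist x t < δ := by
      rw [Real.dist_eq, abs_lt]
      constructor
      · have := hx.1; have := le_max_right 0 (t - δ); simp only [ha] at *; linarith [lt_of_le_of_lt (le_max_right 0 (t - δ)) hx.1]
      · have := hx.2; have : x < t + δ := lt_of_lt_of_le hx.2 (min_le_right T (t + δ)); linarith
    have := hball x hdist
    have habs : |sin (φ x) ^ 2 - sin (φ t) ^ 2| < sin (φ t) ^ 2 / 2 := by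
      simpa [Real.dist_eq] using this
    have := abs_lt.mp habs
    linarith [this.1]
  have hintab : (0:ℝ) < ∫ s in a..b, sin (φ s) ^ 2 :=
    intervalIntegral.intervalIntegral_pos_of_pos_on (hcont.intervalIntegrable a b) hposon hab
  -- but the integral over `[a,b] ⊆ [0,T]` is at most the total integral, which is zero
  have h0a : (0:ℝ) ≤ ∫ s in (0:ℝ)..a, sin (φ s) ^ 2 :=
    intervalIntegral.integral_nonneg (le_max_left 0 (t - δ)) (fun x _ => by positivity)
  have hbT : (0:ℝ) ≤ ∫ s in b..T, sin (φ s) ^ 2 :=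
    intervalIntegral.integral_nonneg (min_le_left T (t + δ)) (fun x _ => by positivity)
  have hsplit : ∫ s in (0:ℝ)..T, sin (φ s) ^ 2 =
      (∫ s in (0:ℝ)..a, sin (φ s) ^ 2) + (∫ s in a..b, sin (φ s) ^ 2)
        + ∫ s in b..T, sin (φ s) ^ 2 := by
    rw [intervalIntegral.integral_add_adjacent_intervals (hcont.intervalIntegrable 0 a)
      (hcont.intervalIntegrable a b),
      intervalIntegral.integral_add_adjacent_intervals (hcont.intervalIntegrable 0 b)
      (hcont.intervalIntegrable b T)]
  rw [hint] at hsplit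
  linarith
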